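/- For v ⊆ {1,…,d}, define the conditional mean μ_v(x) = ∫_{[0,1]^d} f(x_v : y_{-v}) dy (a function of the coordinates of x in v only). Let u ⊆ {1,…,d}, let v, v' ⊆ u^c, and let x, z be independent random vectors, each uniformly distributed on [0,1]^d. Then E[ (f(x) − μ_v(x)) · (f(x_u : z_{-u}) − μ_{v'}(z)) ] = τ̲²_u. -/

import Mathlib

open MeasureTheory Finset
open scoped ENNReal

/-- The uniform (Lebesgue) probability measure on the interval `[0,1]`. -/
noncomputable def unifSeg : Measure ℝ := (volume : Measure ℝ).restrict (Set.Icc 0 1)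

/-- The uniform (Lebesgue) product probability measure on the cube `[0,1]^d`. -/
noncomputable def unifCube (d : ℕ) : Measure (Fin d → ℝ) :=
  Measure.pi fun _ => unifSeg

/-- `glue u x y` is the point whose `j`-th coordinate is `x j` for `j ∈ u`
and `y j` otherwise, i.e. `(x_u : y_{-u})`. -/
def glue {d : ℕ} (u : Finset (Fin d)) (x y : Fin d → ℝ) : Fin d → ℝ :=
  fun j => if j ∈ u then x j else y j

/-- The lower Sobol' index `τ̲²_u` of the set `u`. -/
noncomputable def lowerSobol {d : ℕ} (f : (Fin d → ℝ) → ℝ) (u : Finset (Fin d)) : ℝ :=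
  (∫ x, (∫ y, f (glue u x y) ∂(unifCube d)) ^ 2 ∂(unifCube d))
    - (∫ x, f x ∂(unifCube d)) ^ 2

/-- The variance `σ²` of `f` over the unit cube. -/
noncomputable def sigmaSq {d : ℕ} (f : (Fin d → ℝ) → ℝ) : ℝ :=
  (∫ x, f x ^ 2 ∂(unifCube d)) - (∫ x, f x ∂(unifCube d)) ^ 2

/-- The upper Sobol' index `τ̄²_u = σ² - τ̲²_{uᶜ}` of the set `u`. -/
noncomputable def upperSobol {d : ℕ} (f : (Fin d → ℝ) → ℝ) (u : Finset (Fin d)) : ℝ :=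
  sigmaSq f - lowerSobol f uᶜ

/-- The conditional mean `μ_v(x) = E(f(x) ∣ x_v)`, a function of the coordinates of `x`
in `v` only. -/
noncomputable def condMean {d : ℕ} (f : (Fin d → ℝ) → ℝ) (v : Finset (Fin d))
    (x : Fin d → ℝ) : ℝ :=
  ∫ y, f (glue v x y) ∂(unifCube d)

instance : IsProbabilityMeasure unifSeg := by
  constructor
  simp [unifSeg, Real.volume_Icc]

instance (d : ℕ) : IsProbabilityMeasure (unifCube d) := by
  unfold unifCube; infer_instance

lemma mp_fstsnd {α β : Type*} [MeasurableSpace α] [MeasurableSpace β]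
    (μa : Measure α) (μb : Measure β) [IsProbabilityMeasure μa] [IsProbabilityMeasure μb] :
    MeasurePreserving (Prod.map (Prod.fst : α × β → α) (Prod.snd : α × β → β))
      ((μa.prod μb).prod (μa.prod μb)) (μa.prod μb) := by
  have hfst : MeasurePreserving (Prod.fst : α × β → α) (μa.prod μb) μa :=
    ⟨measurable_fst, by simp⟩
  have hsnd : MeasurePreserving (Prod.snd : α × β → β) (μa.prod μb) μb :=
    ⟨measurable_snd, by simp⟩
  exact hfst.prod hsnd

lemma measurePreserving_glue {d : ℕ} (u : Finset (Fin d)) :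
    MeasurePreserving (fun p : (Fin d → ℝ) × (Fin d → ℝ) => glue u p.1 p.2)
      ((unifCube d).prod (unifCube d)) (unifCube d) := by
  classical
  have hep := measurePreserving_piEquivPiSubtypeProd (fun _ : Fin d => unifSeg) (· ∈ u)
  have key := ((MeasurePreserving.symm _ hep).comp (mp_fstsnd _ _)).comp (hep.prod hep)
  have heq : (⇑(MeasurableEquiv.piEquivPiSubtypeProd (fun _ : Fin d => ℝ) (· ∈ u)).symm
        ∘ Prod.map Prod.fst Prod.snd
        ∘ Prod.map ⇑(MeasurableEquiv.piEquivPiSubtypeProd (fun _ : Fin d => ℝ) (· ∈ u))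
            ⇑(MeasurableEquiv.piEquivPiSubtypeProd (fun _ : Fin d => ℝ) (· ∈ u)))
      = fun p : (Fin d → ℝ) × (Fin d → ℝ) => glue u p.1 p.2 := by
    funext p
    funext j
    simp only [Function.comp_apply, Prod.map_apply,
      MeasurableEquiv.piEquivPiSubtypeProd, MeasurableEquiv.coe_mk,
      Equiv.piEquivPiSubtypeProd, Equiv.coe_fn_mk, Equiv.coe_fn_symm_mk, glue]
    by_cases h : j ∈ u <;> simp [h]
  rw [Function.comp_assoc, heq] at key
  exact key

lemma integral_glue {d : ℕ} (u : Finset (Fin d)) {φ : (Fin d → ℝ) → ℝ}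
    (hφ : AEStronglyMeasurable φ (unifCube d)) :
    ∫ x, φ x ∂(unifCube d)
      = ∫ p, φ (glue u p.1 p.2) ∂((unifCube d).prod (unifCube d)) := by
  conv_lhs => rw [← (measurePreserving_glue u).map_eq]
  exact integral_map (measurePreserving_glue u).aemeasurable
    (by rwa [(measurePreserving_glue u).map_eq])

lemma glue_glue_same {d : ℕ} (u : Finset (Fin d)) (x z y : Fin d → ℝ) :
    glue u (glue u x z) y = glue u x y := by
  funext j; by_cases h : j ∈ u <;> simp [glue, h]

lemma glue_glue_compl {d : ℕ} {u v : Finset (Fin d)} (hv : v ⊆ uᶜ) (x z y : Fin d → ℝ) :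
    glue v (glue u x z) y = glue v z y := by
  funext j
  by_cases h : j ∈ v
  · have hju : j ∉ u := by simpa using hv h
    simp [glue, h, hju]
  · simp [glue, h]

lemma condMean_glue_same {d : ℕ} (f : (Fin d → ℝ) → ℝ) (u : Finset (Fin d)) (x z : Fin d → ℝ) :
    condMean f u (glue u x z) = condMean f u x := by
  unfold condMean; simp only [glue_glue_same]

lemma condMean_glue_compl {d : ℕ} (f : (Fin d → ℝ) → ℝ) {u v : Finset (Fin d)} (hv : v ⊆ uᶜ)
    (x z : Fin d → ℝ) : condMean f v (glue u x z) = condMean f v z := by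
  unfold condMean; simp only [glue_glue_compl hv]

lemma sq_integral_le {α : Type*} [MeasurableSpace α] {ν : Measure α} [IsProbabilityMeasure ν]
    {φ : α → ℝ} (h : MemLp φ 2 ν) : (∫ a, φ a ∂ν) ^ 2 ≤ ∫ a, φ a ^ 2 ∂ν := by
  have h1 := ProbabilityTheory.variance_nonneg φ ν
  rw [ProbabilityTheory.variance_eq_sub h] at h1
  simp only [Pi.pow_apply] at h1
  linarith

lemma mul_mem1 {α : Type*} [MeasurableSpace α] {ν : Measure α} {a b : α → ℝ}
    (ha : MemLp a 2 ν) (hb : MemLp b 2 ν) : Integrable (fun x => a x * b x) ν := by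
  rw [← memLp_one_iff_integrable]
  have h12 : (1 : ℝ≥0∞) / 1 = 1 / 2 + 1 / 2 := by
    rw [ENNReal.div_add_div_same, one_div_one]
    norm_num
    rw [ENNReal.div_self] <;> norm_num
  haveI : ENNReal.HolderTriple 2 2 1 := ⟨by simpa only [one_div] using h12.symm⟩
  exact hb.smul ha

section
variable {d : ℕ} {f : (Fin d → ℝ) → ℝ}

lemma memℒp_glue (hf : MemLp f 2 (unifCube d)) (u : Finset (Fin d)) :
    MemLp (fun p : (Fin d → ℝ) × (Fin d → ℝ) => f (glue u p.1 p.2)) 2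
      ((unifCube d).prod (unifCube d)) :=
  hf.comp_measurePreserving (measurePreserving_glue u)

lemma aesm_condMean (hf : MemLp f 2 (unifCube d)) (w : Finset (Fin d)) :
    AEStronglyMeasurable (condMean f w) (unifCube d) :=
  AEStronglyMeasurable.integral_prod_right' (memℒp_glue hf w).1

lemma memℒp_condMean (hf : MemLp f 2 (unifCube d)) (w : Finset (Fin d)) : MemLp (condMean f w) 2 (unifCube d) := by
  rw [memLp_two_iff_integrable_sq (aesm_condMean hf w)]
  have hBw := memℒp_glue hf w
  have hB2 : Integrable (fun p : (Fin d → ℝ) × (Fin d → ℝ) => f (glue w p.1 p.2) ^ 2)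
      ((unifCube d).prod (unifCube d)) := hBw.integrable_sq
  have hH : Integrable (fun x => ∫ y, f (glue w x y) ^ 2 ∂(unifCube d)) (unifCube d) :=
    hB2.integral_prod_left
  refine Integrable.mono' hH ((aesm_condMean hf w).pow 2) ?_
  have h1 : ∀ᵐ x ∂(unifCube d), Integrable (fun y => f (glue w x y)) (unifCube d) :=
    (hBw.integrable one_le_two).prod_right_ae
  have h2 : ∀ᵐ x ∂(unifCube d), Integrable (fun y => f (glue w x y) ^ 2) (unifCube d) :=
    hB2.prod_right_ae
  filter_upwards [h1, h2] with x hx1 hx2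
  have hm : MemLp (fun y => f (glue w x y)) 2 (unifCube d) :=
    (memLp_two_iff_integrable_sq hx1.aestronglyMeasurable).2 hx2
  calc ‖condMean f w x ^ 2‖ = (∫ y, f (glue w x y) ∂(unifCube d)) ^ 2 := by
        rw [Real.norm_eq_abs, abs_of_nonneg (sq_nonneg _)]; rfl
    _ ≤ _ := sq_integral_le hm

lemma integral_condMean (hf : MemLp f 2 (unifCube d)) (w : Finset (Fin d)) :
    ∫ x, condMean f w x ∂(unifCube d) = ∫ x, f x ∂(unifCube d) := by
  have hint : Integrable (fun p : (Fin d → ℝ) × (Fin d → ℝ) => f (glue w p.1 p.2))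
      ((unifCube d).prod (unifCube d)) := (memℒp_glue hf w).integrable one_le_two
  calc ∫ x, condMean f w x ∂(unifCube d)
      = ∫ p, f (glue w p.1 p.2) ∂((unifCube d).prod (unifCube d)) :=
        (integral_prod _ hint).symm
    _ = ∫ x, f x ∂(unifCube d) := (integral_glue w hf.1).symm

end

lemma mp_fst {d : ℕ} : MeasurePreserving (Prod.fst : ((Fin d → ℝ) × (Fin d → ℝ)) → _)
    ((unifCube d).prod (unifCube d)) (unifCube d) :=
  ⟨measurable_fst, by simp⟩

theorem stmt11 {d : ℕ} (hd : 1 ≤ d) (f : (Fin d → ℝ) → ℝ)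
    (hf : MemLp f 2 (unifCube d))
    (u v v' : Finset (Fin d)) (hv : v ⊆ uᶜ) (hv' : v' ⊆ uᶜ) :
    (∫ x, ∫ z, (f x - condMean f v x) * (f (glue u x z) - condMean f v' z)
        ∂(unifCube d) ∂(unifCube d))
      = lowerSobol f u := by
  classical
  have hCv := memℒp_condMean hf v
  have hCv' := memℒp_condMean hf v'
  have hCu := memℒp_condMean hf u
  have hfi : Integrable f (unifCube d) := hf.integrable one_le_two
  have hCvi : Integrable (condMean f v) (unifCube d) := hCv.integrable one_le_two
  set M := ∫ x, f x ∂(unifCube d) with hM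
  -- Step A/B: compute the inner integral a.e.
  have hstep : (∫ x, ∫ z, (f x - condMean f v x) * (f (glue u x z) - condMean f v' z)
        ∂(unifCube d) ∂(unifCube d))
      = ∫ x, (f x - condMean f v x) * (condMean f u x - M) ∂(unifCube d) := by
    apply integral_congr_ae
    have h1 : ∀ᵐ x ∂(unifCube d), Integrable (fun z => f (glue u x z)) (unifCube d) :=
      ((memℒp_glue hf u).integrable one_le_two).prod_right_ae
    filter_upwards [h1] with x hx
    have hiv' : Integrable (condMean f v') (unifCube d) := hCv'.integrable one_le_two
    rw [integral_const_mul, integral_sub hx hiv', integral_condMean hf v']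
    rfl
  rw [hstep]
  -- Step C: expand the product
  have e1 : Integrable (fun x => f x * condMean f u x) (unifCube d) := mul_mem1 hf hCu
  have e2 : Integrable (fun x => condMean f v x * condMean f u x) (unifCube d) :=
    mul_mem1 hCv hCu
  have hrw : (fun x => (f x - condMean f v x) * (condMean f u x - M))
      = fun x => (f x * condMean f u x - condMean f v x * condMean f u x)
          - M * (f x - condMean f v x) := by
    funext x; ring
  have e12 : Integrable (fun x => f x * condMean f u x - condMean f v x * condMean f u x)
      (unifCube d) := e1.sub e2
  have e3 : Integrable (fun x => M * (f x - condMean f v x)) (unifCube d) :=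
    (hfi.sub hCvi).const_mul M
  rw [hrw, integral_sub e12 e3, integral_sub e1 e2, integral_const_mul,
    integral_sub hfi hCvi, integral_condMean hf v, ← hM]
  -- Step D
  have hD : ∫ x, f x * condMean f u x ∂(unifCube d)
      = ∫ x, (∫ y, f (glue u x y) ∂(unifCube d)) ^ 2 ∂(unifCube d) := by
    have haesm : AEStronglyMeasurable (fun x => f x * condMean f u x) (unifCube d) :=
      hf.1.mul (aesm_condMean hf u)
    rw [integral_glue u haesm]
    simp_rw [condMean_glue_same]
    have h2 : MemLp (fun p : (Fin d → ℝ) × (Fin d → ℝ) => condMean f u p.1) 2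
        ((unifCube d).prod (unifCube d)) := hCu.comp_measurePreserving mp_fst
    have hint : Integrable (fun p : (Fin d → ℝ) × (Fin d → ℝ) =>
        f (glue u p.1 p.2) * condMean f u p.1) ((unifCube d).prod (unifCube d)) :=
      mul_mem1 (memℒp_glue hf u) h2
    rw [integral_prod _ hint]
    simp_rw [integral_mul_const, pow_two]
    rfl
  -- Step E
  have hE : ∫ x, condMean f v x * condMean f u x ∂(unifCube d) = M * M := by
    have haesm : AEStronglyMeasurable (fun x => condMean f v x * condMean f u x)
        (unifCube d) := (aesm_condMean hf v).mul (aesm_condMean hf u)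
    rw [integral_glue u haesm]
    simp_rw [condMean_glue_same, condMean_glue_compl f hv]
    have h' : (∫ p : (Fin d → ℝ) × (Fin d → ℝ), condMean f v p.2 * condMean f u p.1
          ∂((unifCube d).prod (unifCube d)))
        = (∫ x, condMean f u x ∂(unifCube d)) * (∫ x, condMean f v x ∂(unifCube d)) := by
      rw [← integral_prod_mul]
      exact integral_congr_ae (Filter.Eventually.of_forall fun p => mul_comm _ _)
    rw [h', integral_condMean hf u, integral_condMean hf v, ← hM]
  rw [hD, hE]
  unfold lowerSobol
  rw [← hM]
  ring
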